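/- arXiv:2501.06767 — 3 statements merged into one kernel-verified Lean document; each statement's English description precedes it below -/
import Mathlib

section
/- Let (Π_i)_{i≥1} be a sequence of i.i.d. non-negative real random variables, and let k, N be positive integers. For each 1 ≤ p ≤ k let I_p ⊆ ℕ be a subset with exactly N elements, and set Z_p = ∏_{i ∈ I_p} Π_i. Then E[∏_{p=1}^k Z_p] ≤ (E[Π_1^k])^N. In other words, the expectation of the product is maximal when all the subsets I_p coincide. -/
open MeasureTheory ProbabilityTheory ENNReal

-- independence: lintegral of finset product
lemma lintegral_finset_prod_of_iIndep
    {Ω : Type*} [MeasurableSpace Ω] (μ : Measure Ω) [IsProbabilityMeasure μ]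
    (g : ℕ → Ω → ℝ≥0∞) (hg : ∀ i, Measurable (g i))
    (hind : iIndepFun g μ) (s : Finset ℕ) :
    ∫⁻ ω, ∏ i ∈ s, g i ω ∂μ = ∏ i ∈ s, ∫⁻ ω, g i ω ∂μ := by
  classical
  induction s using Finset.induction with
  | empty => simp
  | insert a s hi ih =>
    have hindep : IndepFun (∏ j ∈ s, g j) (g a) μ :=
      hind.indepFun_finset_prod_of_notMem hg hi
    have hprodmeas : Measurable (∏ j ∈ s, g j) := by
      rw [show (∏ j ∈ s, g j) = fun ω => ∏ j ∈ s, g j ω from funext fun ω => by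
        simp [Finset.prod_apply]]
      exact Finset.measurable_prod s (fun j _ => hg j)
    have key := lintegral_mul_eq_lintegral_mul_lintegral_of_indepFun hprodmeas (hg a) hindep
    rw [Finset.prod_insert hi]
    calc ∫⁻ ω, ∏ i ∈ Insert.insert a s, g i ω ∂μ
        = ∫⁻ ω, ((∏ j ∈ s, g j) * g a) ω ∂μ := by
          apply lintegral_congr; intro ω
          simp [Finset.prod_insert hi, Finset.prod_apply, mul_comm]
      _ = (∫⁻ ω, (∏ j ∈ s, g j) ω ∂μ) * ∫⁻ ω, g a ω ∂μ := key
      _ = (∫⁻ ω, g a ω ∂μ) * ∏ i ∈ s, ∫⁻ ω, g i ω ∂μ := by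
          rw [mul_comm, ← ih]; congr 1
          apply lintegral_congr; intro ω; simp [Finset.prod_apply]

-- Lyapunov: ∫ f^m ≤ (∫ f^k)^(m/k)
lemma lintegral_pow_le_rpow
    {Ω : Type*} [MeasurableSpace Ω] (μ : Measure Ω) [IsProbabilityMeasure μ]
    (f : Ω → ℝ≥0∞) (hf : Measurable f) (m k : ℕ) (hm : m ≤ k) (hk : 0 < k) :
    ∫⁻ ω, f ω ^ m ∂μ ≤ (∫⁻ ω, f ω ^ k ∂μ) ^ ((m : ℝ) / k) := by
  rcases Nat.eq_zero_or_pos m with hm0 | hm0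
  · subst hm0; simp
  rcases eq_or_lt_of_le hm with rfl | hmk
  · rw [div_self (by positivity : (m:ℝ) ≠ 0), ENNReal.rpow_one]
  · have hpq : Real.HolderConjugate ((k:ℝ)/m) ((k:ℝ)/(k-m)) := by
      have hmk' : (m:ℝ) < k := by exact_mod_cast hmk
      refine ⟨?_, by positivity, div_pos (by positivity) (by linarith)⟩
      have hk0 : (k:ℝ) ≠ 0 := by positivity
      rw [inv_div, inv_div, inv_one, ← add_div, add_sub_cancel, div_self hk0]
    have H := ENNReal.lintegral_mul_le_Lp_mul_Lq μ hpq
      (f := fun ω => f ω ^ (m:ℝ)) (g := fun _ => 1)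
      ((hf.pow_const m).aemeasurable.congr (by
        filter_upwards with ω using (ENNReal.rpow_natCast (f ω) m).symm))
      aemeasurable_const
    simp only [mul_one, Pi.mul_apply, ENNReal.one_rpow] at H
    have h1 : ∫⁻ (a : Ω), (1:ℝ≥0∞) ∂μ = 1 := by simp
    rw [h1, ENNReal.one_rpow, mul_one] at H
    calc ∫⁻ ω, f ω ^ m ∂μ = ∫⁻ ω, f ω ^ (m:ℝ) ∂μ := by
          apply lintegral_congr; intro ω; exact (ENNReal.rpow_natCast (f ω) m).symm
      _ ≤ (∫⁻ ω, (f ω ^ (m:ℝ)) ^ ((k:ℝ)/m) ∂μ) ^ (1 / ((k:ℝ)/m)) := H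
      _ = (∫⁻ ω, f ω ^ k ∂μ) ^ ((m:ℝ)/k) := by
          congr 1
          · apply lintegral_congr; intro ω
            rw [← ENNReal.rpow_natCast (f ω) k, ← ENNReal.rpow_mul]
            congr 1
            field_simp
          · field_simp

lemma ENNReal_rpow_finset_sum (x : ℝ≥0∞) {ι : Type*} (s : Finset ι) (a : ι → ℝ)
    (ha : ∀ i ∈ s, 0 ≤ a i) : x ^ (∑ i ∈ s, a i) = ∏ i ∈ s, x ^ a i := by
  classical
  induction s using Finset.induction with
  | empty => simp
  | insert b s hi ih =>
    rw [Finset.sum_insert hi, Finset.prod_insert hi,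
      ENNReal.rpow_add_of_nonneg _ _ (ha b (Finset.mem_insert_self b s))
        (Finset.sum_nonneg fun i hi' => ha i (Finset.mem_insert_of_mem hi')),
      ih (fun i hi' => ha i (Finset.mem_insert_of_mem hi'))]

/-- For i.i.d. non-negative random variables `(Π i)` and subsets
`I p ⊆ ℕ` each of cardinality `N`, the expectation of the product
`∏_{p=1}^k ∏_{i ∈ I p} Π i` is at most `(E[Π₁^k])^N`. -/
theorem product_rearrangement_bound
    {Ω : Type*} [MeasurableSpace Ω] (μ : Measure Ω) [IsProbabilityMeasure μ]
    (X : ℕ → Ω → ℝ≥0∞) (hmeas : ∀ i, Measurable (X i))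
    (hindep : iIndepFun X μ)
    (hident : ∀ i, μ.map (X i) = μ.map (X 0))
    (k N : ℕ) (hk : 0 < k) (hN : 0 < N)
    (I : Fin k → Finset ℕ) (hcard : ∀ p, (I p).card = N) :
    ∫⁻ ω, ∏ p : Fin k, ∏ i ∈ I p, X i ω ∂μ ≤ (∫⁻ ω, (X 0 ω) ^ k ∂μ) ^ N := by
  classical
  set S : Finset ℕ := Finset.univ.biUnion I with hS
  set m : ℕ → ℕ := fun i => (Finset.univ.filter (fun p => i ∈ I p)).card with hm
  have hsub : ∀ p, I p ⊆ S := fun p i hi => Finset.mem_biUnion.2 ⟨p, Finset.mem_univ p, hi⟩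
  have hmk : ∀ i, m i ≤ k := by
    intro i
    calc m i ≤ (Finset.univ : Finset (Fin k)).card := Finset.card_le_card (Finset.filter_subset _ _)
      _ = k := by simp
  -- rewrite the integrand
  have hrw : ∀ ω, ∏ p : Fin k, ∏ i ∈ I p, X i ω = ∏ i ∈ S, X i ω ^ m i := by
    intro ω
    have h1 : ∀ p : Fin k, ∏ i ∈ I p, X i ω = ∏ i ∈ S, (if i ∈ I p then X i ω else 1) := by
      intro p
      rw [Finset.prod_ite_mem, Finset.inter_eq_right.2 (hsub p)]
    calc ∏ p : Fin k, ∏ i ∈ I p, X i ω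
        = ∏ p : Fin k, ∏ i ∈ S, (if i ∈ I p then X i ω else 1) := by
          exact Finset.prod_congr rfl fun p _ => h1 p
      _ = ∏ i ∈ S, ∏ p : Fin k, (if i ∈ I p then X i ω else 1) := Finset.prod_comm
      _ = ∏ i ∈ S, X i ω ^ m i := by
          refine Finset.prod_congr rfl fun i _ => ?_
          rw [← Finset.prod_filter, Finset.prod_const]
  -- independence of the powers
  have hgind : iIndepFun (fun i ω => X i ω ^ m i) μ :=
    hindep.comp (fun i (x : ℝ≥0∞) => x ^ m i) (fun i => measurable_id.pow_const (m i))
  have hgmeas : ∀ i, Measurable (fun ω => X i ω ^ m i) := fun i => (hmeas i).pow_const (m i)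
  have step1 : ∫⁻ ω, ∏ p : Fin k, ∏ i ∈ I p, X i ω ∂μ
      = ∏ i ∈ S, ∫⁻ ω, X i ω ^ m i ∂μ := by
    rw [show (fun ω => ∏ p : Fin k, ∏ i ∈ I p, X i ω) = fun ω => ∏ i ∈ S, X i ω ^ m i from
      funext hrw]
    exact lintegral_finset_prod_of_iIndep μ _ hgmeas hgind S
  -- identical distribution
  have step2 : ∀ i, ∫⁻ ω, X i ω ^ m i ∂μ = ∫⁻ ω, X 0 ω ^ m i ∂μ := by
    intro i
    have h1 : ∫⁻ ω, X i ω ^ m i ∂μ = ∫⁻ x, x ^ m i ∂(μ.map (X i)) :=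
      (lintegral_map (measurable_id.pow_const (m i)) (hmeas i)).symm
    have h2 : ∫⁻ ω, X 0 ω ^ m i ∂μ = ∫⁻ x, x ^ m i ∂(μ.map (X 0)) :=
      (lintegral_map (measurable_id.pow_const (m i)) (hmeas 0)).symm
    rw [h1, h2, hident i]
  -- Lyapunov bound
  set A : ℝ≥0∞ := ∫⁻ ω, X 0 ω ^ k ∂μ with hA
  have step3 : ∀ i, ∫⁻ ω, X 0 ω ^ m i ∂μ ≤ A ^ ((m i : ℝ) / k) := fun i =>
    lintegral_pow_le_rpow μ (X 0) (hmeas 0) (m i) k (hmk i) hk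
  -- sum of exponents
  have hsum : ∑ i ∈ S, m i = k * N := by
    have : ∑ i ∈ S, m i = ∑ p : Fin k, (I p).card := by
      simp only [hm, Finset.card_filter]
      rw [Finset.sum_comm]
      refine Finset.sum_congr rfl fun p _ => ?_
      rw [← Finset.card_filter, Finset.filter_mem_eq_inter, Finset.inter_eq_right.2 (hsub p)]
    rw [this]
    simp [hcard, Finset.sum_const, mul_comm]
  calc ∫⁻ ω, ∏ p : Fin k, ∏ i ∈ I p, X i ω ∂μ
      = ∏ i ∈ S, ∫⁻ ω, X i ω ^ m i ∂μ := step1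
    _ = ∏ i ∈ S, ∫⁻ ω, X 0 ω ^ m i ∂μ := Finset.prod_congr rfl fun i _ => step2 i
    _ ≤ ∏ i ∈ S, A ^ ((m i : ℝ) / k) := Finset.prod_le_prod' fun i _ => step3 i
    _ = A ^ (∑ i ∈ S, ((m i : ℝ) / k)) :=
        (ENNReal_rpow_finset_sum A S _ (fun i _ => by positivity)).symm
    _ = A ^ (N : ℝ) := by
        congr 1
        rw [← Finset.sum_div]
        rw [show ∑ i ∈ S, (m i : ℝ) = ((k * N : ℕ) : ℝ) by exact_mod_cast hsum]
        push_cast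
        field_simp
    _ = A ^ N := by rw [ENNReal.rpow_natCast]
end

section
/- Let (Π_i)_{i≥1} be i.i.d. non-negative random variables and let k ≥ 1, N ≥ 1. Suppose each index i belongs to N_i of the sets I_1,…,I_k (each of cardinality N). Then ∑_{i} N_i = kN, and by Jensen's inequality applied to x ↦ x^{k/j} on ℝ₊, ∏_{j=1}^k E[Π_1^j]^{n_j} ≤ E[Π_1^k]^N, where n_j = #{i : N_i = j}, using that ∑_{j=1}^k j·n_j/k = N. -/
open MeasureTheory ProbabilityTheory ENNReal

/-- Lyapunov's inequality: for a probability measure and `0 < a ≤ b`,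
`∫ X^a ≤ (∫ X^b)^(a/b)`. -/
lemma lyapunov_aux {Ω : Type*} [MeasurableSpace Ω] (μ : Measure Ω) [IsProbabilityMeasure μ]
    (X : Ω → ℝ≥0∞) (hX : Measurable X) {a b : ℝ} (ha : 0 < a) (hab : a ≤ b) :
    ∫⁻ ω, X ω ^ a ∂μ ≤ (∫⁻ ω, X ω ^ b ∂μ) ^ (a / b) := by
  rcases eq_or_lt_of_le hab with rfl | h
  · rw [div_self ha.ne', ENNReal.rpow_one]
  · set p := b / a with hp_def
    have hp : 1 < p := (one_lt_div ha).2 h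
    have hpq : p.HolderConjugate (Real.conjExponent p) := Real.HolderConjugate.conjExponent hp
    have hb : b ≠ 0 := (ha.trans h).ne'
    have key := ENNReal.lintegral_mul_le_Lp_mul_Lq μ hpq
      (hX.pow_const a).aemeasurable (aemeasurable_const (b := (1 : ℝ≥0∞)))
    simp only [Pi.mul_apply, mul_one] at key
    have h1 : ∀ ω, (X ω ^ a) ^ p = X ω ^ b := by
      intro ω
      rw [← ENNReal.rpow_mul, hp_def, mul_div_cancel₀ _ ha.ne']
    have h2 : (∫⁻ _ : Ω, (1 : ℝ≥0∞) ^ Real.conjExponent p ∂μ) = 1 := by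
      simp [measure_univ]
    simp only [Pi.mul_apply, mul_one, h1, lintegral_one, measure_univ,
      ENNReal.one_rpow] at key
    calc ∫⁻ ω, X ω ^ a ∂μ ≤ (∫⁻ ω, X ω ^ b ∂μ) ^ (1 / p) := key
      _ = (∫⁻ ω, X ω ^ b ∂μ) ^ (a / b) := by rw [hp_def, one_div_div]

lemma prod_rpow_of_ne {ι : Type*} (s : Finset ι) (f : ι → ℝ) {A : ℝ≥0∞}
    (hA : A ≠ 0) (hA' : A ≠ ⊤) :
    ∏ j ∈ s, A ^ (f j) = A ^ (∑ j ∈ s, f j) := by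
  classical
  induction s using Finset.induction with
  | empty => simp
  | insert a s h ih =>
    rw [Finset.prod_insert h, Finset.sum_insert h, ih, ← ENNReal.rpow_add _ _ hA hA']

/-- With `I p ⊆ ℕ` (p = 1,…,k) each of cardinality `N`, letting
`Ncount i = #{p : i ∈ I p}` and `n j = #{i : Ncount i = j}`, one has
`∑ i Ncount i = k·N`, and for a non-negative random variable `X`,
`∏_{j=1}^k E[X^j]^{n j} ≤ E[X^k]^N` (Jensen's inequality for `x ↦ x^{k/j}`). -/
theorem counting_and_jensen_bound
    {Ω : Type*} [MeasurableSpace Ω] (μ : Measure Ω) [IsProbabilityMeasure μ]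
    (X : Ω → ℝ≥0∞) (hX : Measurable X)
    (k N : ℕ) (hk : 0 < k) (hN : 0 < N)
    (I : Fin k → Finset ℕ) (hcard : ∀ p, (I p).card = N)
    (Ncount : ℕ → ℕ)
    (hNcount : ∀ i, Ncount i = (Finset.univ.filter (fun p : Fin k => i ∈ I p)).card)
    (n : ℕ → ℕ)
    (hn : ∀ j, n j = ((Finset.univ.biUnion I).filter (fun i => Ncount i = j)).card) :
    (∑ i ∈ Finset.univ.biUnion I, Ncount i) = k * N ∧
    ∏ j ∈ Finset.Icc 1 k, (∫⁻ ω, X ω ^ j ∂μ) ^ (n j) ≤ (∫⁻ ω, X ω ^ k ∂μ) ^ N := by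
  set B := Finset.univ.biUnion I with hB
  -- Part 1 : double counting
  have part1 : (∑ i ∈ B, Ncount i) = k * N := by
    have : (∑ i ∈ B, Ncount i) = ∑ i ∈ B, ∑ p : Fin k, if i ∈ I p then 1 else 0 := by
      refine Finset.sum_congr rfl fun i _ => ?_
      rw [hNcount i, Finset.card_filter]
    rw [this, Finset.sum_comm]
    have hsub : ∀ p : Fin k, I p ⊆ B := fun p => Finset.subset_biUnion_of_mem I (Finset.mem_univ p)
    have : ∀ p : Fin k, (∑ i ∈ B, if i ∈ I p then 1 else 0) = N := by
      intro p
      rw [Finset.sum_ite_mem, Finset.inter_eq_right.2 (hsub p), Finset.sum_const, smul_eq_mul,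
        mul_one, hcard p]
    simp only [this, Finset.sum_const, Finset.card_univ, Fintype.card_fin, smul_eq_mul]
  refine ⟨part1, ?_⟩
  -- membership of Ncount values in Icc 1 k
  have hmem : ∀ i ∈ B, Ncount i ∈ Finset.Icc 1 k := by
    intro i hi
    rw [Finset.mem_biUnion] at hi
    obtain ⟨p, _, hip⟩ := hi
    rw [Finset.mem_Icc, hNcount i]
    constructor
    · exact Finset.card_pos.2 ⟨p, Finset.mem_filter.2 ⟨Finset.mem_univ p, hip⟩⟩
    · exact (Finset.card_filter_le _ _).trans (by simp)
  -- the key counting identity ∑ j * n j = k * N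
  have key : (∑ j ∈ Finset.Icc 1 k, j * n j) = k * N := by
    rw [← part1, ← Finset.sum_fiberwise_of_maps_to hmem (fun i => Ncount i)]
    refine Finset.sum_congr rfl fun j _ => ?_
    rw [hn j]
    rw [Finset.sum_congr rfl (fun i hi => (Finset.mem_filter.1 hi).2)]
    rw [Finset.sum_const, smul_eq_mul, mul_comm]
  set A := ∫⁻ ω, X ω ^ k ∂μ with hA
  -- Lyapunov for each j ∈ Icc 1 k
  have hlya : ∀ j ∈ Finset.Icc 1 k, (∫⁻ ω, X ω ^ j ∂μ) ≤ A ^ ((j : ℝ) / k) := by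
    intro j hj
    rw [Finset.mem_Icc] at hj
    have h1 : (0 : ℝ) < j := by exact_mod_cast hj.1
    have h2 : (j : ℝ) ≤ k := by exact_mod_cast hj.2
    have := lyapunov_aux μ X hX h1 h2
    rw [hA]
    simpa [← ENNReal.rpow_natCast] using this
  by_cases hAtop : A = ⊤
  · rw [hAtop, ENNReal.top_pow hN.ne']
    exact le_top
  by_cases hA0 : A = 0
  · -- then ∫ X^j = 0 for all j in Icc 1 k, and some n j > 0
    have hz : ∀ j ∈ Finset.Icc 1 k, (∫⁻ ω, X ω ^ j ∂μ) = 0 := by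
      intro j hj
      have := hlya j hj
      rw [hA0, ENNReal.zero_rpow_of_pos] at this
      · exact le_antisymm this zero_le
      · rw [Finset.mem_Icc] at hj
        exact div_pos (by exact_mod_cast hj.1) (by exact_mod_cast hk)
    obtain ⟨j, hj, hnj⟩ : ∃ j ∈ Finset.Icc 1 k, n j ≠ 0 := by
      by_contra hcon
      push_neg at hcon
      have : (∑ j ∈ Finset.Icc 1 k, j * n j) = 0 :=
        Finset.sum_eq_zero fun j hj => by rw [hcon j hj, mul_zero]
      rw [key] at this
      exact (Nat.mul_pos hk hN).ne' this
    have : ∏ j ∈ Finset.Icc 1 k, (∫⁻ ω, X ω ^ j ∂μ) ^ (n j) = 0 := by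
      apply Finset.prod_eq_zero hj
      rw [hz j hj, zero_pow hnj]
    rw [this]
    exact zero_le
  -- main case: 0 < A < ⊤
  calc ∏ j ∈ Finset.Icc 1 k, (∫⁻ ω, X ω ^ j ∂μ) ^ (n j)
      ≤ ∏ j ∈ Finset.Icc 1 k, (A ^ ((j : ℝ) / k)) ^ (n j) :=
        Finset.prod_le_prod' fun j hj => pow_le_pow_left' (hlya j hj) _
    _ = ∏ j ∈ Finset.Icc 1 k, A ^ (((j : ℝ) / k) * n j) := by
        refine Finset.prod_congr rfl fun j _ => ?_
        rw [← ENNReal.rpow_natCast (A ^ ((j : ℝ) / k)), ← ENNReal.rpow_mul]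
    _ = A ^ (∑ j ∈ Finset.Icc 1 k, ((j : ℝ) / k) * n j) := prod_rpow_of_ne _ _ hA0 hAtop
    _ = A ^ (N : ℝ) := by
        congr 1
        have : (∑ j ∈ Finset.Icc 1 k, ((j : ℝ) / k) * n j)
            = (∑ j ∈ Finset.Icc 1 k, (j : ℝ) * n j) / k := by
          rw [Finset.sum_div]
          exact Finset.sum_congr rfl fun j _ => by ring
        rw [this]
        have hsum : (∑ j ∈ Finset.Icc 1 k, (j : ℝ) * n j) = (k : ℝ) * N := by
          rw [← Nat.cast_mul, ← key]
          push_cast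
          rfl
        have hk' : (k : ℝ) ≠ 0 := by exact_mod_cast hk.ne'
        rw [hsum, mul_comm, mul_div_assoc, div_self hk', mul_one]
    _ = A ^ N := by rw [ENNReal.rpow_natCast]
end

section
/- Let γ ≥ 0 and for Γ > 0 let S_Γ be a random variable with density (1/(2K_γ(2Γ))) e^{γ s − 2Γ cosh s} on ℝ. Then for every α ∈ (0,1) there exists δ_0 > 0 such that for all Γ ∈ (0, δ_0): P(e^{2 S_Γ} ≥ Γ^{−α}) ≥ (1−α)/2. In particular, as Γ → 0 the law of e^{2S_Γ} is not tight: its tail at level Γ^{−α} stays bounded below. -/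
open MeasureTheory

/-- Modified Bessel function of the second kind,
`K_γ(x) = (1/2)∫_{-∞}^{∞} e^{γt - x cosh t} dt`. -/
noncomputable def besselK (γ x : ℝ) : ℝ :=
  (1 / 2) * ∫ t : ℝ, Real.exp (γ * t - x * Real.cosh t)

private lemma cosh_le_exp_abs' (x : ℝ) : Real.cosh x ≤ Real.exp |x| := by
  rw [Real.cosh_eq]
  have h1 : Real.exp x ≤ Real.exp |x| := Real.exp_le_exp.2 (le_abs_self x)
  have h2 : Real.exp (-x) ≤ Real.exp |x| := Real.exp_le_exp.2 (neg_le_abs x)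
  linarith

private lemma sq_div_four_le_exp' {x : ℝ} (hx : 0 ≤ x) : x ^ 2 / 4 ≤ Real.exp x := by
  have h := Real.add_one_le_exp (x / 2)
  have h2 : Real.exp (x / 2) * Real.exp (x / 2) = Real.exp x := by
    rw [← Real.exp_add]; ring_nf
  nlinarith [Real.exp_pos (x / 2)]

private lemma exp_abs_le_two_cosh (x : ℝ) : Real.exp |x| ≤ 2 * Real.cosh x := by
  rw [Real.cosh_eq]
  rcases abs_cases x with ⟨h, _⟩ | ⟨h, _⟩ <;> rw [h] <;>
    nlinarith [Real.exp_pos x, Real.exp_pos (-x)]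

private lemma integrable_F (γ Γ : ℝ) (hγ : 0 ≤ γ) (hΓ : 0 < Γ) :
    Integrable (fun s : ℝ => Real.exp (γ * s - 2 * Γ * Real.cosh s)) := by
  have hbase : Integrable (fun s : ℝ => Real.exp (-|s|)) := by
    rw [← integrableOn_univ, ← Set.Iic_union_Ioi (a := (0 : ℝ))]
    refine IntegrableOn.union ?_ ?_
    · exact (integrableOn_exp_Iic 0).congr_fun
        (fun x hx => by rw [abs_of_nonpos hx, neg_neg]) measurableSet_Iic
    · exact (exp_neg_integrableOn_Ioi 0 one_pos).congr_fun
        (fun x hx => by rw [abs_of_pos hx]; ring_nf) measurableSet_Ioi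
  have hcont : Continuous (fun s : ℝ => Real.exp (γ * s - 2 * Γ * Real.cosh s)) :=
    Real.continuous_exp.comp
      ((continuous_const.mul continuous_id).sub (continuous_const.mul Real.continuous_cosh))
  refine (hbase.const_mul (Real.exp ((γ + 1) ^ 2 / Γ))).mono' hcont.aestronglyMeasurable
    (Filter.Eventually.of_forall fun s => ?_)
  rw [Real.norm_eq_abs, Real.abs_exp, ← Real.exp_add]
  apply Real.exp_le_exp.2
  have h1 : |s| ^ 2 / 4 ≤ Real.exp |s| := sq_div_four_le_exp' (abs_nonneg s)
  have h2 : Real.exp |s| ≤ 2 * Real.cosh s := exp_abs_le_two_cosh s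
  have h3 : γ * s ≤ γ * |s| := mul_le_mul_of_nonneg_left (le_abs_self s) hγ
  have hC : (γ + 1) ^ 2 / Γ * Γ = (γ + 1) ^ 2 := div_mul_cancel₀ _ hΓ.ne'
  nlinarith [sq_nonneg (Γ * |s| - 2 * (γ + 1)), mul_le_mul_of_nonneg_left h1 hΓ.le,
    mul_le_mul_of_nonneg_left h2 hΓ.le, sq_abs s, abs_nonneg s]

private lemma sixteen_lt_exp_three : (16 : ℝ) < Real.exp 3 := by
  have h := Real.exp_one_gt_d9
  have h3 : Real.exp 1 ^ 3 = Real.exp 3 := by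
    rw [show ((3:ℝ)) = ((3:ℕ):ℝ) by norm_num, Real.exp_one_pow]
  have h4 : (2.7182818283 : ℝ) ^ 3 < Real.exp 1 ^ 3 :=
    pow_lt_pow_left₀ h (by norm_num) (by norm_num)
  rw [h3] at h4
  norm_num at h4
  linarith

private lemma lower_bound_integral (γ Γ a b : ℝ) (hγ : 0 ≤ γ) (hΓ : 0 < Γ) (hab : a ≤ b)
    (ha : Real.log Γ + 3 ≤ a) (hb : b ≤ -Real.log Γ - 3) :
    (b - a) * (7 / 8 * Real.exp (γ * a)) ≤
      ∫ s, Real.exp (γ * s - 2 * Γ * Real.cosh s) := by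
  have hint := integrable_F γ Γ hγ hΓ
  have key : ∀ s ∈ Set.Icc a b,
      7 / 8 * Real.exp (γ * a) ≤ Real.exp (γ * s - 2 * Γ * Real.cosh s) := by
    intro s hs
    have habs : |s| ≤ -Real.log Γ - 3 := abs_le.2 ⟨by linarith [hs.1], by linarith [hs.2]⟩
    have hcosh : Real.cosh s ≤ Real.exp (-Real.log Γ - 3) :=
      (cosh_le_exp_abs' s).trans (Real.exp_le_exp.2 habs)
    have hval : Real.exp (-Real.log Γ - 3) = 1 / Γ * (Real.exp 3)⁻¹ := by
      rw [Real.exp_sub, Real.exp_neg, Real.exp_log hΓ]; ring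
    have hsmall : 2 * Γ * Real.cosh s ≤ 1 / 8 := by
      have h1 : 2 * Γ * Real.cosh s ≤ 2 * Γ * (1 / Γ * (Real.exp 3)⁻¹) :=
        mul_le_mul_of_nonneg_left (hcosh.trans_eq hval) (by positivity)
      have h2 : 2 * Γ * (1 / Γ * (Real.exp 3)⁻¹) = 2 * (Real.exp 3)⁻¹ := by
        field_simp
      have h3 : (16 : ℝ) < Real.exp 3 := sixteen_lt_exp_three
      have h4 : (Real.exp 3)⁻¹ * Real.exp 3 = 1 := inv_mul_cancel₀ (Real.exp_pos 3).ne'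
      rw [h2] at h1
      nlinarith [inv_nonneg.2 (Real.exp_pos 3).le]
    have e1 : Real.exp (γ * a) ≤ Real.exp (γ * s) :=
      Real.exp_le_exp.2 (mul_le_mul_of_nonneg_left hs.1 hγ)
    have e2 : 7 / 8 ≤ Real.exp (-(2 * Γ * Real.cosh s)) := by
      have := Real.add_one_le_exp (-(2 * Γ * Real.cosh s))
      linarith
    calc 7 / 8 * Real.exp (γ * a)
        ≤ Real.exp (-(2 * Γ * Real.cosh s)) * Real.exp (γ * s) :=
          mul_le_mul e2 e1 (Real.exp_pos _).le (Real.exp_pos _).le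
      _ = Real.exp (γ * s - 2 * Γ * Real.cosh s) := by
          rw [← Real.exp_add]; ring_nf
  have hvol : volume (Set.Icc a b) ≠ ⊤ := by
    rw [Real.volume_Icc]; exact ENNReal.ofReal_ne_top
  have h := setIntegral_ge_of_const_le measurableSet_Icc hvol key hint.integrableOn
  rw [Real.volume_real_Icc_of_le hab, smul_eq_mul] at h
  have h2 := setIntegral_le_integral (s := Set.Icc a b) hint
    (Filter.Eventually.of_forall fun s => (Real.exp_pos _).le)
  linarith

private lemma main_aux (γ Γ α : ℝ) (hγ : 0 ≤ γ) (hΓ : 0 < Γ) (hΓ1 : Γ < 1)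
    (hα0 : 0 < α) (hα1 : α < 1)
    (hK : -Real.log Γ * Real.exp (γ * (α / 2 * -Real.log Γ)) ≤
      ∫ s, Real.exp (γ * s - 2 * Γ * Real.cosh s)) :
    ENNReal.ofReal ((1 - α) / 2) ≤
      ((volume : Measure ℝ).withDensity (fun s =>
          ENNReal.ofReal ((1 / (2 * besselK γ (2 * Γ))) *
            Real.exp (γ * s - 2 * Γ * Real.cosh s))))
        {s : ℝ | Γ ^ (-α) ≤ Real.exp (2 * s)} := by
  set I : ℝ := ∫ s, Real.exp (γ * s - 2 * Γ * Real.cosh s) with hIdef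
  set L : ℝ := -Real.log Γ with hLdef
  set T : ℝ := α / 2 * L with hTdef
  have hL : 0 < L := by
    rw [hLdef]; simpa using Real.log_neg hΓ hΓ1
  have hT : 0 < T := by rw [hTdef]; positivity
  have hI : 0 < I := lt_of_lt_of_le (by positivity) hK
  have hint := integrable_F γ Γ hγ hΓ
  set g : ℝ → ENNReal :=
    fun s => ENNReal.ofReal (1 / I * Real.exp (γ * s - 2 * Γ * Real.cosh s)) with hgdef
  have hcont : Continuous (fun s : ℝ => Real.exp (γ * s - 2 * Γ * Real.cosh s)) :=
    Real.continuous_exp.comp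
      ((continuous_const.mul continuous_id).sub (continuous_const.mul Real.continuous_cosh))
  have hgm : Measurable g := (hcont.measurable.const_mul (1 / I)).ennreal_ofReal
  have hbk : (fun s : ℝ => ENNReal.ofReal ((1 / (2 * besselK γ (2 * Γ))) *
      Real.exp (γ * s - 2 * Γ * Real.cosh s))) = g := by
    have h2K : 2 * besselK γ (2 * Γ) = I := by
      rw [besselK, hIdef]; ring
    rw [hgdef, h2K]
  have hA : {s : ℝ | Γ ^ (-α) ≤ Real.exp (2 * s)} = Set.Ici T := by
    ext s
    simp only [Set.mem_setOf_eq, Set.mem_Ici]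
    rw [Real.rpow_def_of_pos hΓ, Real.exp_le_exp]
    rw [hTdef, hLdef]
    constructor <;> intro <;> nlinarith
  rw [hbk, hA]
  -- total mass is 1
  have htot : (volume : Measure ℝ).withDensity g Set.univ = 1 := by
    rw [withDensity_apply _ MeasurableSet.univ, Measure.restrict_univ, hgdef]
    rw [← ofReal_integral_eq_lintegral_ofReal (hint.const_mul (1 / I))
      (Filter.Eventually.of_forall fun s => by positivity)]
    rw [integral_const_mul, ← hIdef, one_div, inv_mul_cancel₀ hI.ne', ENNReal.ofReal_one]
  -- reflection bound
  have hq : (volume : Measure ℝ).withDensity g (Set.Iic (-T)) ≤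
      (volume : Measure ℝ).withDensity g (Set.Ici T) := by
    rw [withDensity_apply _ measurableSet_Iic, withDensity_apply _ measurableSet_Ici]
    have hpre : (fun x : ℝ => -x) ⁻¹' (Set.Iic (-T)) = Set.Ici T := by
      ext x; simp [neg_le_neg_iff]
    have hchg := (Measure.measurePreserving_neg (volume : Measure ℝ)).setLIntegral_comp_preimage_emb
      (MeasurableEquiv.neg ℝ).measurableEmbedding g (Set.Iic (-T))
    rw [hpre] at hchg
    rw [← hchg]
    refine setLIntegral_mono hgm ?_
    intro x hx
    rw [hgdef]
    apply ENNReal.ofReal_le_ofReal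
    apply mul_le_mul_of_nonneg_left _ (by positivity)
    apply Real.exp_le_exp.2
    have hx0 : 0 ≤ x := le_trans hT.le hx
    rw [Real.cosh_neg]
    nlinarith [mul_nonneg hγ hx0]
  -- middle bound
  have hm : (volume : Measure ℝ).withDensity g (Set.Ioo (-T) T) ≤ ENNReal.ofReal α := by
    rw [withDensity_apply _ measurableSet_Ioo]
    have hb1 : ∫⁻ s in Set.Ioo (-T) T, g s ∂(volume : Measure ℝ) ≤
        ∫⁻ _ in Set.Ioo (-T) T, ENNReal.ofReal (1 / I * Real.exp (γ * T)) ∂(volume : Measure ℝ) := by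
      refine setLIntegral_mono measurable_const ?_
      intro s hs
      rw [hgdef]
      apply ENNReal.ofReal_le_ofReal
      apply mul_le_mul_of_nonneg_left _ (by positivity)
      apply Real.exp_le_exp.2
      have h1 : γ * s ≤ γ * T := mul_le_mul_of_nonneg_left hs.2.le hγ
      nlinarith [Real.one_le_cosh s, hΓ]
    rw [setLIntegral_const, Real.volume_Ioo] at hb1
    refine hb1.trans ?_
    rw [← ENNReal.ofReal_mul (by positivity)]
    apply ENNReal.ofReal_le_ofReal
    have h1 : α * (L * Real.exp (γ * T)) ≤ α * I := mul_le_mul_of_nonneg_left hK hα0.le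
    have h2 : 1 / I * Real.exp (γ * T) * (T - -T) = α * (L * Real.exp (γ * T)) / I := by
      rw [hTdef]; field_simp; ring
    rw [h2, div_le_iff₀ hI]
    nlinarith
  -- combine
  have hcover : (1 : ENNReal) ≤
      (volume : Measure ℝ).withDensity g (Set.Iic (-T)) +
      ((volume : Measure ℝ).withDensity g (Set.Ioo (-T) T) +
       (volume : Measure ℝ).withDensity g (Set.Ici T)) := by
    rw [← htot]
    calc (volume : Measure ℝ).withDensity g Set.univ
        ≤ (volume : Measure ℝ).withDensity g
            (Set.Iic (-T) ∪ (Set.Ioo (-T) T ∪ Set.Ici T)) := by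
          apply measure_mono
          intro s _
          rcases le_or_gt s (-T) with h | h
          · exact Or.inl h
          · rcases lt_or_ge s T with h2 | h2
            · exact Or.inr (Or.inl ⟨h, h2⟩)
            · exact Or.inr (Or.inr h2)
      _ ≤ _ := le_trans (measure_union_le _ _)
            (add_le_add le_rfl (measure_union_le _ _))
  set p : ENNReal := (volume : Measure ℝ).withDensity g (Set.Ici T) with hpdef
  have hp : (1 : ENNReal) ≤ p + p + ENNReal.ofReal α := by
    refine hcover.trans ?_
    calc (volume : Measure ℝ).withDensity g (Set.Iic (-T)) +
        ((volume : Measure ℝ).withDensity g (Set.Ioo (-T) T) + p)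
        ≤ p + (ENNReal.ofReal α + p) := add_le_add hq (add_le_add hm le_rfl)
      _ = p + p + ENNReal.ofReal α := by ring
  have h2 : ENNReal.ofReal (1 - α) ≤ p + p := by
    have heq : ENNReal.ofReal (1 - α) = 1 - ENNReal.ofReal α := by
      rw [ENNReal.ofReal_sub _ hα0.le, ENNReal.ofReal_one]
    rw [heq]
    exact tsub_le_iff_right.2 hp
  refine (ENNReal.mul_le_mul_iff_right (a := 2) two_ne_zero ENNReal.ofNat_ne_top).1 ?_
  calc 2 * ENNReal.ofReal ((1 - α) / 2)
      = ENNReal.ofReal (2 * ((1 - α) / 2)) := by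
        rw [ENNReal.ofReal_mul (by norm_num : (0:ℝ) ≤ 2), ENNReal.ofReal_ofNat]
    _ = ENNReal.ofReal (1 - α) := by rw [show (2:ℝ) * ((1 - α) / 2) = 1 - α by ring]
    _ ≤ p + p := h2
    _ = 2 * p := (two_mul p).symm

/-- Laplace-method estimate, equation (eqRec1): for `γ ≥ 0` and
`α ∈ (0,1)` there is `δ₀ > 0` such that for all `Γ ∈ (0, δ₀)`, a random
variable `S_Γ` with density `(1/(2K_γ(2Γ))) e^{γs − 2Γ cosh s}` satisfies
`P(e^{2S_Γ} ≥ Γ^{−α}) ≥ (1−α)/2`. -/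
theorem gig_small_parameter_tail_lower_bound
    (γ : ℝ) (hγ : 0 ≤ γ) (α : ℝ) (hα0 : 0 < α) (hα1 : α < 1) :
    ∃ δ₀ : ℝ, 0 < δ₀ ∧ ∀ Γ : ℝ, 0 < Γ → Γ < δ₀ →
      ENNReal.ofReal ((1 - α) / 2) ≤
        ((volume : Measure ℝ).withDensity (fun s =>
            ENNReal.ofReal ((1 / (2 * besselK γ (2 * Γ))) *
              Real.exp (γ * s - 2 * Γ * Real.cosh s))))
          {s : ℝ | Γ ^ (-α) ≤ Real.exp (2 * s)} := by
  rcases hγ.eq_or_lt with h | h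
  · -- γ = 0
    subst h
    refine ⟨Real.exp (-16), Real.exp_pos _, fun Γ hΓ0 hΓδ => ?_⟩
    have hlog : Real.log Γ < -16 := by
      have := Real.log_lt_log hΓ0 hΓδ
      rwa [Real.log_exp] at this
    have hΓ1 : Γ < 1 := lt_trans hΓδ (by rw [← Real.exp_zero]; exact Real.exp_lt_exp.2 (by norm_num))
    refine main_aux 0 Γ α le_rfl hΓ0 hΓ1 hα0 hα1 ?_
    have hmain := lower_bound_integral 0 Γ (Real.log Γ + 3) (-Real.log Γ - 3) le_rfl hΓ0
      (by linarith) le_rfl le_rfl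
    simp only [zero_mul, Real.exp_zero, mul_one] at hmain ⊢
    nlinarith
  · -- γ > 0
    refine ⟨Real.exp (-(16 + 128 / γ ^ 2)), Real.exp_pos _, fun Γ hΓ0 hΓδ => ?_⟩
    have hlog : Real.log Γ < -(16 + 128 / γ ^ 2) := by
      have := Real.log_lt_log hΓ0 hΓδ
      rwa [Real.log_exp] at this
    have hd : (0:ℝ) < 128 / γ ^ 2 := by positivity
    have hΓ1 : Γ < 1 := by
      refine lt_trans hΓδ ?_
      rw [← Real.exp_zero]
      exact Real.exp_lt_exp.2 (by linarith)
    refine main_aux γ Γ α hγ hΓ0 hΓ1 hα0 hα1 ?_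
    set L : ℝ := -Real.log Γ with hLdef
    have hL : 16 + 128 / γ ^ 2 < L := by rw [hLdef]; linarith
    have hL16 : (16:ℝ) < L := by linarith
    have hγ2L : 128 < γ ^ 2 * L := by
      have h128 : 128 / γ ^ 2 < L := by linarith
      rw [div_lt_iff₀ (by positivity)] at h128
      linarith [h128]
    have hmain := lower_bound_integral γ Γ (L - 4) (L - 3) hγ hΓ0 (by linarith)
      (by rw [hLdef]; linarith) (by rw [hLdef])
    set T : ℝ := α / 2 * L with hTdef
    have hTle : T ≤ L / 2 := by rw [hTdef]; nlinarith
    have hT0 : 0 < T := by rw [hTdef]; positivity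
    have hx0 : 0 ≤ γ * (L / 2 - 4) := mul_nonneg hγ (by linarith)
    have hsplit : Real.exp (γ * (L - 4)) = Real.exp (γ * T) * Real.exp (γ * (L - 4 - T)) := by
      rw [← Real.exp_add]; ring_nf
    have h1 : Real.exp (γ * (L / 2 - 4)) ≤ Real.exp (γ * (L - 4 - T)) :=
      Real.exp_le_exp.2 (by nlinarith)
    have h2 : (γ * (L / 2 - 4)) ^ 2 / 4 ≤ Real.exp (γ * (L / 2 - 4)) :=
      sq_div_four_le_exp' hx0
    have h5 : 2 * L ≤ (γ * (L / 2 - 4)) ^ 2 / 4 := by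
      have h3 : L / 4 ≤ L / 2 - 4 := by linarith
      have h4 : γ ^ 2 * (L / 4) ^ 2 ≤ γ ^ 2 * (L / 2 - 4) ^ 2 :=
        mul_le_mul_of_nonneg_left (pow_le_pow_left₀ (by linarith) h3 2) (sq_nonneg γ)
      nlinarith [mul_le_mul_of_nonneg_right hγ2L.le (by linarith : (0:ℝ) ≤ L)]
    have hfinal : L * Real.exp (γ * T) ≤ 7 / 8 * Real.exp (γ * (L - 4)) := by
      rw [hsplit]
      have hE : 2 * L ≤ Real.exp (γ * (L - 4 - T)) := by linarith
      nlinarith [Real.exp_pos (γ * T), hL16]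
    calc L * Real.exp (γ * T) ≤ 7 / 8 * Real.exp (γ * (L - 4)) := hfinal
      _ = (L - 3 - (L - 4)) * (7 / 8 * Real.exp (γ * (L - 4))) := by ring
      _ ≤ _ := hmain
end
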